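/- Let σ ∈ {±1}, and let n, k ∈ ℤ³ \ {0} with n₃ = 0, k₃ ≠ 0 and |k| = |n−k|. Then e^σ(k)·(n−k) · e^σ(n−k) + e^σ(n−k)·k · e^σ(k) = (e^σ(k)·e^σ(n−k))·n, where e^σ denotes the helical eigenvector satisfying m × e^σ(m) = σ i |m| e^σ(m). -/
import Mathlib


/-- Euclidean norm of an integer vector in ℤ³. -/
noncomputable def nrm (v : Fin 3 → ℤ) : ℝ :=
  Real.sqrt (((v 0 : ℝ)) ^ 2 + ((v 1 : ℝ)) ^ 2 + ((v 2 : ℝ)) ^ 2)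

/-- Cross product on ℂ³. -/
def cross3 (u v : Fin 3 → ℂ) : Fin 3 → ℂ :=
  ![u 1 * v 2 - u 2 * v 1, u 2 * v 0 - u 0 * v 2, u 0 * v 1 - u 1 * v 0]

/-- Bilinear dot product a·b = Σ aⱼ bⱼ on ℂ³. -/
noncomputable def dotc (u v : Fin 3 → ℂ) : ℂ := ∑ i, u i * v i

/-- Complexification of an integer vector. -/
def intC (v : Fin 3 → ℤ) : Fin 3 → ℂ := fun i => (v i : ℂ)


lemma triple3 (u v w : Fin 3 → ℂ) :
    cross3 u (cross3 v w) = dotc u w • v - dotc u v • w := by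
  funext i
  fin_cases i <;>
    simp [cross3, dotc, Fin.sum_univ_three, Pi.smul_apply, smul_eq_mul] <;> ring

lemma cross3_smul (c : ℂ) (u v : Fin 3 → ℂ) :
    cross3 u (c • v) = c • cross3 u v := by
  funext i
  fin_cases i <;>
    simp [cross3, Pi.smul_apply, smul_eq_mul] <;> ring

lemma cross3_anticomm (u v : Fin 3 → ℂ) : cross3 u v = -cross3 v u := by
  funext i
  fin_cases i <;> simp [cross3] <;> ring

lemma dotc_comm (u v : Fin 3 → ℂ) : dotc u v = dotc v u := by
  simp [dotc, Fin.sum_univ_three]; ring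

/-- Cancellation identity behind the vanishing of the vertical average of the resonant
nonlinearity: if n₃ = 0, k₃ ≠ 0, |k| = |n−k| and e_k, e_m are helical eigenvectors of k
and n−k (for the same sign σ), then
(e_k·(n−k)) e_m + (e_m·k) e_k = (e_k·e_m) n. -/
theorem resonant_cancellation (σ : ℝ) (hσ : σ = 1 ∨ σ = -1)
    (n k : Fin 3 → ℤ) (hn : n ≠ 0) (hk : k ≠ 0)
    (hn3 : n 2 = 0) (hk3 : k 2 ≠ 0) (hnorm : nrm k = nrm (n - k))
    (ek em : Fin 3 → ℂ)
    (hek : cross3 (intC k) ek = ((σ : ℂ) * Complex.I * ((nrm k : ℝ) : ℂ)) • ek)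
    (hem : cross3 (intC (n - k)) em
      = ((σ : ℂ) * Complex.I * ((nrm (n - k) : ℝ) : ℂ)) • em) :
    (dotc ek (intC (n - k))) • em + (dotc em (intC k)) • ek
      = (dotc ek em) • intC n := by
  set c : ℂ := (σ : ℂ) * Complex.I * ((nrm k : ℝ) : ℂ) with hc
  have hem' : cross3 (intC (n - k)) em = c • em := by rw [hem, hc, hnorm]
  have h1 : dotc ek em • intC (n - k) - dotc ek (intC (n - k)) • em
      = c • cross3 ek em := by
    rw [← cross3_smul, ← hem', triple3]
  have h2 : dotc em ek • intC k - dotc em (intC k) • ek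
      = -(c • cross3 ek em) := by
    rw [cross3_anticomm ek em, smul_neg, neg_neg, ← cross3_smul, ← hek, triple3]
  have hsum : intC (n - k) + intC k = intC n := by
    funext i; simp [intC, Pi.sub_apply]
  have h3 := congrArg₂ (· + ·) h1 h2
  simp only [add_neg_cancel] at h3
  have h3' : dotc ek em • intC (n - k) + dotc ek em • intC k
      = dotc ek (intC (n - k)) • em + dotc em (intC k) • ek := by
    rw [dotc_comm em ek] at h3
    linear_combination (norm := module) h3
  rw [← smul_add, hsum] at h3'
  exact h3'.symm
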